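/- Let K be a field, f₁, ..., f_s ∈ K[X₁, ..., X_n], and A = K[X₁, ..., X_n]/(f₁, ..., f_s) the quotient algebra. If Ω_{A/K} = 0, then the Krull dimension of A is at most 0. -/

import Mathlib

/-- If `A = K[X₁,...,Xₙ]/(f₁,...,f_s)` over a field `K` satisfies `Ω_{A/K} = 0`,
then the Krull dimension of `A` is at most `0`. -/
theorem stmt18 {K : Type*} [Field K] {n s : ℕ}
    (f : Fin s → MvPolynomial (Fin n) K)
    (h : Subsingleton
      (KaehlerDifferential K (MvPolynomial (Fin n) K ⧸ Ideal.span (Set.range f)))) :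
    ringKrullDim (MvPolynomial (Fin n) K ⧸ Ideal.span (Set.range f)) ≤ 0 := by
  set A := MvPolynomial (Fin n) K ⧸ Ideal.span (Set.range f)
  have : Algebra.FormallyUnramified K A := ⟨h⟩
  have : Algebra.FiniteType K A := .of_surjective
    (Ideal.Quotient.mkₐ K _) (Ideal.Quotient.mkₐ_surjective K _)
  have : Module.Free K A := Module.Free.of_divisionRing K A
  have : Module.Finite K A := Algebra.FormallyUnramified.finite_of_free K A
  have : IsArtinianRing A := IsArtinianRing.of_finite K A
  have hm : ∀ p : PrimeSpectrum A, p.asIdeal.IsMaximal := fun p =>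
    IsArtinianRing.isMaximal_of_isPrime p.asIdeal
  have : ringKrullDim A ≤ Order.krullDim PUnit.{1} := by
    apply Order.krullDim_le_of_strictMono (fun _ => PUnit.unit)
    intro p q hpq
    exact hpq.ne (PrimeSpectrum.ext ((hm p).eq_of_le (q.isPrime).ne_top hpq.le))
  simpa [Order.krullDim_eq_zero_of_unique] using this
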